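/- arXiv:1706.04693 — 4 statements merged into one kernel-verified Lean document; each statement's English description precedes it below -/
import Mathlib

section
/- In every double interchange semigroup S, for all elements a, b, c, d, e, f of S: ((a ▴ b) ▴ c) ▵ ((d ▵ e) ▴ f) = ((a ▵ d) ▵ e) ▴ ((b ▴ c) ▵ f). -/
/-- A six-variable relation in every double interchange semigroup.
Here `tri` is `▵` and `blk` is `▴`. -/
theorem dis_six_variable_relation {S : Type*} (tri blk : S → S → S)
    (htri : ∀ a b c : S, tri (tri a b) c = tri a (tri b c))
    (hblk : ∀ a b c : S, blk (blk a b) c = blk a (blk b c))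
    (hint : ∀ a b c d : S, blk (tri a b) (tri c d) = tri (blk a c) (blk b d))
    (a b c d e f : S) :
    tri (blk (blk a b) c) (blk (tri d e) f) =
    blk (tri (tri a d) e) (tri (blk b c) f) := by
  rw [hblk a b c]
  rw [← hint a (tri d e) (blk b c) f]
  rw [← htri a d e]
end

section
/- In every double interchange semigroup S, for all elements a, b, c, d, e, f, g, h, i, j of S: ((a ▵ b) ▴ (c ▵ (d ▴ e))) ▵ (((f ▴ g) ▵ h) ▴ (i ▵ j)) = ((a ▵ ((b ▴ d) ▴ g)) ▴ (c ▵ e)) ▵ ((f ▵ h) ▴ (i ▵ j)). -/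
/-- A ten-variable relation in every double interchange semigroup
(an intermediate step in the Configuration A rewriting).
Here `tri` is `▵` and `blk` is `▴`. -/
theorem dis_ten_variable_relation_1 {S : Type*} (tri blk : S → S → S)
    (htri : ∀ a b c : S, tri (tri a b) c = tri a (tri b c))
    (hblk : ∀ a b c : S, blk (blk a b) c = blk a (blk b c))
    (hint : ∀ a b c d : S, blk (tri a b) (tri c d) = tri (blk a c) (blk b d))
    (a b c d e f g h i j : S) :
    tri (blk (tri a b) (tri c (blk d e))) (blk (tri (blk f g) h) (tri i j)) =
    tri (blk (tri a (blk (blk b d) g)) (tri c e)) (blk (tri f h) (tri i j)) := by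
  calc
    tri (blk (tri a b) (tri c (blk d e))) (blk (tri (blk f g) h) (tri i j))
    _ = tri (tri (blk a c) (blk b (blk d e))) (blk (tri (blk f g) h) (tri i j)) := by rw [hint a b c (blk d e)]
    _ = tri (tri (blk a c) (blk (blk b d) e)) (blk (tri (blk f g) h) (tri i j)) := by rw [(hblk b d e).symm]
    _ = tri (blk (tri a (blk b d)) (tri c e)) (blk (tri (blk f g) h) (tri i j)) := by rw [(hint a (blk b d) c e).symm]
    _ = blk (tri (tri a (blk b d)) (tri (blk f g) h)) (tri (tri c e) (tri i j)) := by rw [(hint (tri a (blk b d)) (tri (blk f g) h) (tri c e) (tri i j)).symm]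
    _ = blk (tri (tri (tri a (blk b d)) (blk f g)) h) (tri (tri c e) (tri i j)) := by rw [(htri (tri a (blk b d)) (blk f g) h).symm]
    _ = tri (blk (tri (tri a (blk b d)) (blk f g)) (tri c e)) (blk h (tri i j)) := by rw [hint (tri (tri a (blk b d)) (blk f g)) h (tri c e) (tri i j)]
    _ = tri (tri (blk (tri a (blk b d)) c) (blk (blk f g) e)) (blk h (tri i j)) := by rw [hint (tri a (blk b d)) (blk f g) c e]
    _ = tri (tri (blk (tri a (blk b d)) c) (blk f (blk g e))) (blk h (tri i j)) := by rw [hblk f g e]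
    _ = tri (blk (tri (tri a (blk b d)) f) (tri c (blk g e))) (blk h (tri i j)) := by rw [(hint (tri a (blk b d)) f c (blk g e)).symm]
    _ = blk (tri (tri (tri a (blk b d)) f) h) (tri (tri c (blk g e)) (tri i j)) := by rw [(hint (tri (tri a (blk b d)) f) h (tri c (blk g e)) (tri i j)).symm]
    _ = blk (tri (tri a (blk b d)) (tri f h)) (tri (tri c (blk g e)) (tri i j)) := by rw [htri (tri a (blk b d)) f h]
    _ = tri (blk (tri a (blk b d)) (tri c (blk g e))) (blk (tri f h) (tri i j)) := by rw [hint (tri a (blk b d)) (tri f h) (tri c (blk g e)) (tri i j)]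
    _ = tri (tri (blk a c) (blk (blk b d) (blk g e))) (blk (tri f h) (tri i j)) := by rw [hint a (blk b d) c (blk g e)]
    _ = tri (tri (blk a c) (blk (blk (blk b d) g) e)) (blk (tri f h) (tri i j)) := by rw [(hblk (blk b d) g e).symm]
    _ = tri (blk (tri a (blk (blk b d) g)) (tri c e)) (blk (tri f h) (tri i j)) := by rw [(hint a (blk (blk b d) g) c e).symm]
end

section
/- In every double interchange semigroup S, for all elements a, b, c, d, e, f, g, h, i, j of S: ((a ▵ b) ▴ (c ▵ (d ▴ e))) ▵ (((f ▴ g) ▵ h) ▴ (i ▵ j)) = (a ▴ (c ▵ (g ▴ e))) ▵ ((((b ▴ d) ▵ f) ▵ h) ▴ (i ▵ j)). -/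
/-- A ten-variable relation in every double interchange semigroup
(an intermediate step in the Configuration A rewriting).
Here `tri` is `▵` and `blk` is `▴`. -/
theorem dis_ten_variable_relation_2 {S : Type*} (tri blk : S → S → S)
    (htri : ∀ a b c : S, tri (tri a b) c = tri a (tri b c))
    (hblk : ∀ a b c : S, blk (blk a b) c = blk a (blk b c))
    (hint : ∀ a b c d : S, blk (tri a b) (tri c d) = tri (blk a c) (blk b d))
    (a b c d e f g h i j : S) :
    tri (blk (tri a b) (tri c (blk d e))) (blk (tri (blk f g) h) (tri i j)) =
    tri (blk a (tri c (blk g e))) (blk (tri (tri (blk b d) f) h) (tri i j)) := by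
  calc tri (blk (tri a b) (tri c (blk d e))) (blk (tri (blk f g) h) (tri i j))
      _ = tri (tri (blk a c) (blk b (blk d e))) (blk (tri (blk f g) h) (tri i j)) := by rw [hint a b c (blk d e)]
      _ = tri (tri (blk a c) (blk (blk b d) e)) (blk (tri (blk f g) h) (tri i j)) := by rw [← hblk b d e]
      _ = tri (blk (tri a (blk b d)) (tri c e)) (blk (tri (blk f g) h) (tri i j)) := by rw [← hint a (blk b d) c e]
      _ = blk (tri (tri a (blk b d)) (tri (blk f g) h)) (tri (tri c e) (tri i j)) := by rw [← hint (tri a (blk b d)) (tri (blk f g) h) (tri c e) (tri i j)]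
      _ = blk (tri (tri (tri a (blk b d)) (blk f g)) h) (tri (tri c e) (tri i j)) := by rw [← htri (tri a (blk b d)) (blk f g) h]
      _ = tri (blk (tri (tri a (blk b d)) (blk f g)) (tri c e)) (blk h (tri i j)) := by rw [hint (tri (tri a (blk b d)) (blk f g)) h (tri c e) (tri i j)]
      _ = tri (tri (blk (tri a (blk b d)) c) (blk (blk f g) e)) (blk h (tri i j)) := by rw [hint (tri a (blk b d)) (blk f g) c e]
      _ = tri (tri (blk (tri a (blk b d)) c) (blk f (blk g e))) (blk h (tri i j)) := by rw [hblk f g e]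
      _ = tri (blk (tri (tri a (blk b d)) f) (tri c (blk g e))) (blk h (tri i j)) := by rw [← hint (tri a (blk b d)) f c (blk g e)]
      _ = tri (blk (tri a (tri (blk b d) f)) (tri c (blk g e))) (blk h (tri i j)) := by rw [htri a (blk b d) f]
      _ = blk (tri (tri a (tri (blk b d) f)) h) (tri (tri c (blk g e)) (tri i j)) := by rw [← hint (tri a (tri (blk b d) f)) h (tri c (blk g e)) (tri i j)]
      _ = blk (tri a (tri (tri (blk b d) f) h)) (tri (tri c (blk g e)) (tri i j)) := by rw [htri a (tri (blk b d) f) h]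
      _ = tri (blk a (tri c (blk g e))) (blk (tri (tri (blk b d) f) h) (tri i j)) := by rw [hint a (tri (tri (blk b d) f) h) (tri c (blk g e)) (tri i j)]
end

section
/- In every double interchange semigroup S, for all elements a, b, c, d, e, f, g, h, i, j of S: ((a ▵ b) ▴ (c ▵ (d ▴ e))) ▵ (((f ▴ g) ▵ h) ▴ (i ▵ j)) = ((a ▵ (b ▴ d)) ▵ (f ▵ h)) ▴ (((c ▵ e) ▵ (g ▴ i)) ▵ j). -/
/-- A ten-variable relation in every double interchange semigroup
(an intermediate step in the Configuration A rewriting).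
Here `tri` is `▵` and `blk` is `▴`. -/
theorem dis_ten_variable_relation_5 {S : Type*} (tri blk : S → S → S)
    (htri : ∀ a b c : S, tri (tri a b) c = tri a (tri b c))
    (hblk : ∀ a b c : S, blk (blk a b) c = blk a (blk b c))
    (hint : ∀ a b c d : S, blk (tri a b) (tri c d) = tri (blk a c) (blk b d))
    (a b c d e f g h i j : S) :
    tri (blk (tri a b) (tri c (blk d e))) (blk (tri (blk f g) h) (tri i j)) =
    blk (tri (tri a (blk b d)) (tri f h)) (tri (tri (tri c e) (blk g i)) j) := by
  rw [hint a b c (blk d e)]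
  rw [hint (blk f g) h i j]
  rw [hblk f g i]
  rw [← hint f h (blk g i) j]
  rw [← hblk b d e]
  rw [← hint a (blk b d) c e]
  rw [← hint (tri a (blk b d)) (tri f h) (tri c e) (tri (blk g i) j)]
  rw [← htri (tri c e) (blk g i) j]
end
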